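/- arXiv:1712.06248 — 2 statements merged into one kernel-verified Lean document; each statement's English description precedes it below -/
import Mathlib

section
/- Let C be a right rigid Krull–Schmidt monoidal category, 𝓑 = { X ∈ inde C | C(𝟙,X) ≠ 0 }, Z ∈ 𝓑, and suppose there exists an indecomposable object X such that add(X^∨⊗X) ∩ 𝓑 = {Z}. Then: (i) co_X factors as a composition 𝟙 → Z^{⊕k} → X^∨⊗X for some k ∈ ℤ_{>0}; (ii) the tensor ideal Ψ^{-1}(Tr_Z P_𝟙) is generated (as a tensor ideal) by 1_X; (iii) the thick left-tensor Ob-ideal Ob(Ψ^{-1}(Tr_Z P_𝟙)) is generated by X; (iv) Ob(Ψ^{-1}(Tr_Z P_𝟙)) is generated by Z. -/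
open CategoryTheory CategoryTheory.Limits CategoryTheory.MonoidalCategory

namespace TIP

attribute [local instance] CategoryTheory.Limits.hasBinaryBiproducts_of_finite_biproducts

universe v u v₂ u₂

section DirectSummand

variable {C : Type u} [Category.{v} C]

/-- `X` is a direct summand of `Y` (i.e. `X` is a retract of `Y`). -/
def IsDirectSummand (X Y : C) : Prop := ∃ (i : X ⟶ Y) (r : Y ⟶ X), i ≫ r = 𝟙 X

end DirectSummand

section Submod

variable {C : Type u} [Category.{v} C] [Preadditive C]

/-- A subfunctor (submodule) of the representable module `P_Z = C(Z, -)`. -/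
structure Submod (Z : C) where
  carrier : ∀ X : C, AddSubgroup (Z ⟶ X)
  map_mem : ∀ {X Y : C} (f : X ⟶ Y) {φ : Z ⟶ X}, φ ∈ carrier X → φ ≫ f ∈ carrier Y

theorem Submod.ext' {Z : C} {M N : Submod Z} (h : M.carrier = N.carrier) : M = N := by
  cases M; cases N; cases h; rfl

instance {Z : C} : PartialOrder (Submod Z) where
  le M N := ∀ X : C, M.carrier X ≤ N.carrier X
  le_refl M X := le_rfl
  le_trans M N P h h' X := (h X).trans (h' X)
  le_antisymm M N h h' := Submod.ext' (funext fun X => le_antisymm (h X) (h' X))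

/-- Post-composition with a fixed morphism, as an additive map. -/
def postcompHom (Z : C) {X Y : C} (f : X ⟶ Y) : (Z ⟶ X) →+ (Z ⟶ Y) where
  toFun g := g ≫ f
  map_zero' := Limits.zero_comp
  map_add' a b := Preadditive.add_comp _ _ _ _ _ _

/-- The trace submodule `Tr_S P_Z` of the representable module `P_Z`, for a class
of objects `S`. -/
def traceSub (Z : C) (S : Set C) : Submod Z where
  carrier Y := AddSubgroup.closure {h : Z ⟶ Y | ∃ W ∈ S, ∃ (b : Z ⟶ W) (a : W ⟶ Y), h = b ≫ a}
  map_mem := by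
    intro X Y f φ hφ
    have h1 : postcompHom Z f φ ∈ (AddSubgroup.closure
        {h : Z ⟶ X | ∃ W ∈ S, ∃ (b : Z ⟶ W) (a : W ⟶ X), h = b ≫ a}).map (postcompHom Z f) :=
      AddSubgroup.mem_map_of_mem _ hφ
    rw [AddMonoidHom.map_closure] at h1
    refine AddSubgroup.closure_mono ?_ h1
    rintro x ⟨h, ⟨W, hW, b, a, rfl⟩, rfl⟩
    exact ⟨W, hW, b, a ≫ f, by simp [postcompHom]⟩

/-- The action of the endomorphism ring `C(X,X)` on `C(Z,X)` by post-composition. -/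
instance endSMul {Z X : C} : SMul (End X) (Z ⟶ X) := ⟨fun e φ => φ ≫ e⟩

theorem end_smul_def {Z X : C} (e : End X) (φ : Z ⟶ X) : e • φ = φ ≫ e := rfl

/-- `C(Z,X)` is a left module over the endomorphism ring `C(X,X)`. -/
instance endModule {Z X : C} : Module (End X) (Z ⟶ X) where
  one_smul φ := by simp [end_smul_def, End.one_def]
  mul_smul e f φ := by simp [end_smul_def, End.mul_def]
  smul_zero e := by simp [end_smul_def]
  smul_add e φ ψ := Preadditive.add_comp _ _ _ _ _ _
  add_smul e f φ := Preadditive.comp_add _ _ _ _ _ _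
  zero_smul φ := by simp [end_smul_def]

end Submod

section KS

variable {C : Type u} [Category.{v} C] [Preadditive C] [HasBinaryBiproducts C]

/-- An object of an additive category is indecomposable if it is nonzero and
any decomposition as a biproduct has a zero summand. -/
def Indecomposable (X : C) : Prop :=
  ¬ IsZero X ∧ ∀ Y Z : C, Nonempty (X ≅ Y ⊞ Z) → IsZero Y ∨ IsZero Z

end KS

section KS2

variable (C : Type u) [Category.{v} C] [Preadditive C] [HasFiniteBiproducts C]

/-- A Krull-Schmidt category: every object is a finite biproduct of indecomposable
objects, and indecomposable objects have local endomorphism rings. -/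
structure IsKrullSchmidt : Prop where
  local_end : ∀ X : C, Indecomposable X → IsLocalRing (End X)
  decomp : ∀ X : C, ∃ (n : ℕ) (f : Fin n → C),
    (∀ i, Indecomposable (f i)) ∧ Nonempty (X ≅ ⨁ f)

end KS2

section Monoidal

variable {C : Type u} [Category.{v} C] [MonoidalCategory C]

/-- A right dual `(X^∨, ev_X, co_X)` of an object `X`, with
`ev_X : X ⊗ X^∨ ⟶ 𝟙` and `co_X : 𝟙 ⟶ X^∨ ⊗ X` satisfying the zigzag identities. -/
structure RightDual (X : C) where
  dual : C
  ev : X ⊗ dual ⟶ 𝟙_ C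
  coev : 𝟙_ C ⟶ dual ⊗ X
  zigzag₁ : (ρ_ X).inv ≫ (X ◁ coev) ≫ (α_ X dual X).inv ≫ (ev ▷ X) ≫ (λ_ X).hom = 𝟙 X
  zigzag₂ : (λ_ dual).inv ≫ (coev ▷ dual) ≫ (α_ dual X dual).hom ≫ (dual ◁ ev) ≫ (ρ_ dual).hom
      = 𝟙 dual

/-- The map `ι_{XY} : C(𝟙, X^∨ ⊗ Y) → C(X, Y)`, `φ ↦ (ev_X ⊗ 1_Y) ∘ (1_X ⊗ φ)`,
defined in terms of the raw data of a dual object and an evaluation morphism. -/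
def iotaRaw {X : C} (Xd : C) (ev : X ⊗ Xd ⟶ 𝟙_ C) {Y : C} (φ : 𝟙_ C ⟶ Xd ⊗ Y) : X ⟶ Y :=
  (ρ_ X).inv ≫ (X ◁ φ) ≫ (α_ X Xd Y).inv ≫ (ev ▷ Y) ≫ (λ_ Y).hom

/-- The isomorphism `ι_{XY} : C(𝟙, X^∨ ⊗ Y) → C(X, Y)`, `φ ↦ (ev_X ⊗ 1_Y) ∘ (1_X ⊗ φ)`. -/
def iota {X : C} (D : RightDual X) {Y : C} (φ : 𝟙_ C ⟶ D.dual ⊗ Y) : X ⟶ Y :=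
  iotaRaw D.dual D.ev φ

/-- The inverse of `ι_{XY}`, given by `f ↦ (1_{X^∨} ⊗ f) ∘ co_X`. -/
def iotaInv {X : C} (D : RightDual X) {Y : C} (f : X ⟶ Y) : 𝟙_ C ⟶ D.dual ⊗ Y :=
  D.coev ≫ (D.dual ◁ f)

end Monoidal

section TId

variable (C : Type u) [Category.{v} C] [Preadditive C] [MonoidalCategory C]

/-- A left-tensor ideal in a preadditive monoidal category. -/
structure TensorIdeal where
  carrier : ∀ X Y : C, AddSubgroup (X ⟶ Y)
  comp_pre : ∀ {W X Y : C} (g : W ⟶ X) {f : X ⟶ Y}, f ∈ carrier X Y → g ≫ f ∈ carrier W Y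
  comp_post : ∀ {X Y Z : C} {f : X ⟶ Y} (h : Y ⟶ Z), f ∈ carrier X Y → f ≫ h ∈ carrier X Z
  whisker_mem : ∀ (Z : C) {X Y : C} {f : X ⟶ Y}, f ∈ carrier X Y →
    Z ◁ f ∈ carrier (Z ⊗ X) (Z ⊗ Y)

variable {C}

theorem TensorIdeal.ext' {J K : TensorIdeal C} (h : J.carrier = K.carrier) : J = K := by
  cases J; cases K; cases h; rfl

instance : PartialOrder (TensorIdeal C) where
  le J K := ∀ X Y : C, J.carrier X Y ≤ K.carrier X Y
  le_refl J X Y := le_rfl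
  le_trans J K L h h' X Y := (h X Y).trans (h' X Y)
  le_antisymm J K h h' :=
    TensorIdeal.ext' (funext fun X => funext fun Y => le_antisymm (h X Y) (h' X Y))

variable (C)

/-- The tensor ideal of all morphisms. -/
def TensorIdeal.top : TensorIdeal C where
  carrier _ _ := ⊤
  comp_pre := by intros; exact AddSubgroup.mem_top _
  comp_post := by intros; exact AddSubgroup.mem_top _
  whisker_mem := by intros; exact AddSubgroup.mem_top _

variable {C}

/-- `Ψ` maps a tensor ideal `J` to the subfunctor `J(𝟙, -)` of the principal module
`P_𝟙 = C(𝟙, -)`. -/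
def Psi (J : TensorIdeal C) : Submod (𝟙_ C) where
  carrier X := J.carrier (𝟙_ C) X
  map_mem := by intro X Y f φ hφ; exact J.comp_post f hφ

variable (C) [MonoidalPreadditive C]

/-- The zero tensor ideal. -/
def TensorIdeal.bot : TensorIdeal C where
  carrier _ _ := ⊥
  comp_pre := by
    intro W X Y g f hf
    rw [AddSubgroup.mem_bot] at *
    rw [hf, Limits.comp_zero]
  comp_post := by
    intro X Y Z f h hf
    rw [AddSubgroup.mem_bot] at *
    rw [hf, Limits.zero_comp]
  whisker_mem := by
    intro Z X Y f hf
    rw [AddSubgroup.mem_bot] at *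
    rw [hf, MonoidalPreadditive.whiskerLeft_zero]

end TId

section Thick

variable (C : Type u) [Category.{v} C] [Preadditive C] [MonoidalCategory C]
  [HasBinaryBiproducts C]

/-- A thick left-tensor Ob-ideal: an isomorphism closed class of objects, closed under
direct sums, direct summands, and tensoring on the left by arbitrary objects. -/
structure ThickIdeal where
  carrier : Set C
  iso_mem : ∀ {X Y : C}, (X ≅ Y) → X ∈ carrier → Y ∈ carrier
  biprod_mem_iff : ∀ X Y : C, ((X ⊞ Y) ∈ carrier ↔ (X ∈ carrier ∧ Y ∈ carrier))
  tensor_mem : ∀ (Y : C) {X : C}, X ∈ carrier → (Y ⊗ X) ∈ carrier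

variable {C}

theorem ThickIdeal.ext' {I I' : ThickIdeal C} (h : I.carrier = I'.carrier) : I = I' := by
  cases I; cases I'; cases h; rfl

instance : PartialOrder (ThickIdeal C) where
  le I I' := I.carrier ⊆ I'.carrier
  le_refl I := Set.Subset.refl _
  le_trans I I' I'' h h' := Set.Subset.trans h h'
  le_antisymm I I' h h' := ThickIdeal.ext' (le_antisymm h h')

/-- The decategorification map `Ob`, sending a tensor ideal `J` to the thick
left-tensor Ob-ideal of objects `X` with `1_X ∈ J(X,X)`. -/
def obIdeal (J : TensorIdeal C) : ThickIdeal C where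
  carrier := {X : C | 𝟙 X ∈ J.carrier X X}
  iso_mem := by
    intro X Y e hX
    have h := J.comp_pre e.inv (J.comp_post e.hom hX)
    simpa using h
  biprod_mem_iff := by
    intro X Y
    constructor
    · intro h
      constructor
      · have h1 := J.comp_pre (biprod.inl : X ⟶ X ⊞ Y) (J.comp_post (biprod.fst : X ⊞ Y ⟶ X) h)
        simpa using h1
      · have h1 := J.comp_pre (biprod.inr : Y ⟶ X ⊞ Y) (J.comp_post (biprod.snd : X ⊞ Y ⟶ Y) h)
        simpa using h1
    · rintro ⟨hX, hY⟩
      have h1 := J.comp_pre (biprod.fst : X ⊞ Y ⟶ X) (J.comp_post (biprod.inl : X ⟶ X ⊞ Y) hX)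
      have h2 := J.comp_pre (biprod.snd : X ⊞ Y ⟶ Y) (J.comp_post (biprod.inr : Y ⟶ X ⊞ Y) hY)
      simp only [Category.id_comp] at h1 h2
      have h3 := AddSubgroup.add_mem _ h1 h2
      rw [biprod.total] at h3
      exact h3
  tensor_mem := by
    intro Y X hX
    have h := J.whisker_mem Y hX
    simpa using h

end Thick

section Braided

variable {C : Type u} [Category.{v} C] [MonoidalCategory C] [BraidedCategory C]

/-- The trace of an endomorphism, with respect to a choice of right duals. -/
def traceMor (D : ∀ X : C, RightDual X) {X : C} (f : X ⟶ X) : 𝟙_ C ⟶ 𝟙_ C :=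
  (D X).coev ≫ ((D X).dual ◁ f) ≫ (β_ (D X).dual X).hom ≫ (D X).ev

end Braided


section Aux

set_option linter.unusedVariables false
set_option linter.unusedSectionVars false

variable {C : Type u} [Category.{v} C]

section Pairing

variable [MonoidalCategory C]

/-- A `RightDual` structure gives an exact pairing in the sense of mathlib. -/
def RightDual.pairing {X : C} (D : RightDual X) : ExactPairing D.dual X where
  coevaluation' := D.coev
  evaluation' := D.ev
  coevaluation_evaluation' := by
    rw [← cancel_epi (ρ_ X).inv, ← cancel_mono (λ_ X).hom]
    simpa [Category.assoc] using D.zigzag₁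
  evaluation_coevaluation' := by
    rw [← cancel_epi (λ_ D.dual).inv, ← cancel_mono (ρ_ D.dual).hom]
    simpa [Category.assoc] using D.zigzag₂

/-- Every morphism `𝟙 ⟶ W ⊗ X` factors through the coevaluation. -/
theorem RightDual.exists_coev_factor {X W : C} (D : RightDual X) (b : 𝟙_ C ⟶ W ⊗ X) :
    ∃ g : D.dual ⟶ W, D.coev ≫ (g ▷ X) = b := by
  letI := D.pairing
  refine ⟨(λ_ D.dual).inv ≫ (tensorRightHomEquiv (𝟙_ C) D.dual X W).symm b, ?_⟩
  apply (tensorRightHomEquiv (𝟙_ C) D.dual X W).symm.injective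
  have hη : D.coev = η_ D.dual X := rfl
  rw [hη, tensorRightHomEquiv_symm_coevaluation_comp_whiskerRight]
  simp

/-- `ι ∘ ι⁻¹ = id` : reconstruction of a morphism from its "name". -/
theorem RightDual.iota_iotaInv {A B : C} (D : RightDual A) (f : A ⟶ B) :
    (ρ_ A).inv ≫ (A ◁ (D.coev ≫ (D.dual ◁ f))) ≫ (α_ A D.dual B).inv ≫
      (D.ev ▷ B) ≫ (λ_ B).hom = f := by
  have h := @tensorLeftHomEquiv_symm_coevaluation_comp_whiskerLeft C _ _ D.dual A B D.pairing f
  dsimp [tensorLeftHomEquiv, ExactPairing.coevaluation, ExactPairing.evaluation,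
    RightDual.pairing] at h
  have h' : A ◁ (D.coev ≫ D.dual ◁ f) ≫ (α_ A D.dual B).inv ≫ D.ev ▷ B ≫ (λ_ B).hom
      = (ρ_ A).hom ≫ f := h
  rw [h']
  simp

end Pairing

section ZeroStuff

variable [Preadditive C] [HasFiniteBiproducts C]

theorem isZero_biproduct_empty (f : Fin 0 → C) : IsZero (⨁ f) := by
  rw [IsZero.iff_id_eq_zero]
  exact biproduct.hom_ext _ _ fun j => j.elim0

end ZeroStuff

section Gen

variable [Preadditive C] [MonoidalCategory C] [MonoidalPreadditive C]

/-- Pre-composition with a fixed morphism, as an additive map. -/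
def precompHom {A A' B : C} (g : A' ⟶ A) : (A ⟶ B) →+ (A' ⟶ B) where
  toFun f := g ≫ f
  map_zero' := Limits.comp_zero
  map_add' a b := Preadditive.comp_add _ _ _ _ _ _

/-- Left whiskering, as an additive map. -/
def whiskerHom (Z : C) {A B : C} : (A ⟶ B) →+ (Z ⊗ A ⟶ Z ⊗ B) where
  toFun f := Z ◁ f
  map_zero' := MonoidalPreadditive.whiskerLeft_zero
  map_add' a b := by simp

/-- The generating set for the tensor ideal generated by `1_X`. -/
def genSet (X A B : C) : Set (A ⟶ B) :=
  {f | ∃ (W : C) (b : A ⟶ W ⊗ X) (a : W ⊗ X ⟶ B), f = b ≫ a}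

/-- The left-tensor ideal generated by `1_X`. -/
def idealGen (X : C) : TensorIdeal C where
  carrier A B := AddSubgroup.closure (genSet X A B)
  comp_pre := by
    intro W' A B g f hf
    have h1 : precompHom g f ∈ (AddSubgroup.closure (genSet X A B)).map (precompHom g) :=
      AddSubgroup.mem_map_of_mem _ hf
    rw [AddMonoidHom.map_closure] at h1
    refine AddSubgroup.closure_mono ?_ h1
    rintro x ⟨h, ⟨W, b, a, rfl⟩, rfl⟩
    exact ⟨W, g ≫ b, a, by simp [precompHom]⟩
  comp_post := by
    intro A B B' f h hf
    have h1 : postcompHom A h f ∈ (AddSubgroup.closure (genSet X A B)).map (postcompHom A h) :=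
      AddSubgroup.mem_map_of_mem _ hf
    rw [AddMonoidHom.map_closure] at h1
    refine AddSubgroup.closure_mono ?_ h1
    rintro x ⟨x', ⟨W, b, a, rfl⟩, rfl⟩
    exact ⟨W, b, a ≫ h, by simp [postcompHom]⟩
  whisker_mem := by
    intro Z A B f hf
    have h1 : whiskerHom Z f ∈ (AddSubgroup.closure (genSet X A B)).map (whiskerHom Z) :=
      AddSubgroup.mem_map_of_mem _ hf
    rw [AddMonoidHom.map_closure] at h1
    refine AddSubgroup.closure_mono ?_ h1
    rintro x ⟨x', ⟨W, b, a, rfl⟩, rfl⟩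
    refine ⟨Z ⊗ W, (Z ◁ b) ≫ (α_ Z W X).inv, (α_ Z W X).hom ≫ (Z ◁ a), ?_⟩
    simp [whiskerHom, MonoidalCategory.whiskerLeft_comp]

/-- Elements of the trace submodule are finite sums of morphisms factoring through `Z`. -/
theorem traceSub_exists_sum {Z T : C} {h : 𝟙_ C ⟶ T}
    (hh : h ∈ (traceSub (𝟙_ C) ({Z} : Set C)).carrier T) :
    ∃ (n : ℕ) (b : Fin n → (𝟙_ C ⟶ Z)) (a : Fin n → (Z ⟶ T)), h = ∑ i, b i ≫ a i := by
  let G : AddSubgroup (𝟙_ C ⟶ T) :=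
    { carrier := {h | ∃ (n : ℕ) (b : Fin n → (𝟙_ C ⟶ Z)) (a : Fin n → (Z ⟶ T)),
        h = ∑ i, b i ≫ a i}
      zero_mem' := ⟨0, Fin.elim0, Fin.elim0, by simp⟩
      add_mem' := by
        rintro x y ⟨m, b, a, rfl⟩ ⟨m', b', a', rfl⟩
        refine ⟨m + m', Fin.append b b', Fin.append a a', ?_⟩
        rw [Fin.sum_univ_add]
        congr 1 <;> exact Finset.sum_congr rfl fun i _ => by simp
      neg_mem' := by
        rintro x ⟨m, b, a, rfl⟩
        refine ⟨m, fun i => -(b i), a, ?_⟩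
        simp [Preadditive.neg_comp] }
  have hle : AddSubgroup.closure
      {h : 𝟙_ C ⟶ T | ∃ W ∈ ({Z} : Set C), ∃ (b : 𝟙_ C ⟶ W) (a : W ⟶ T), h = b ≫ a} ≤ G := by
    refine (AddSubgroup.closure_le _).mpr ?_
    rintro x ⟨W, hW, b, a, rfl⟩
    rw [Set.mem_singleton_iff] at hW
    subst hW
    exact ⟨1, fun _ => b, fun _ => a, by simp⟩
  exact hle hh

variable [HasFiniteBiproducts C]

theorem traceSub_exists_biproduct_factor {Z T : C} {h : 𝟙_ C ⟶ T}
    (hh : h ∈ (traceSub (𝟙_ C) ({Z} : Set C)).carrier T) :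
    ∃ (n : ℕ) (p : 𝟙_ C ⟶ ⨁ (fun _ : Fin n => Z)) (q : (⨁ (fun _ : Fin n => Z)) ⟶ T),
      h = p ≫ q := by
  obtain ⟨n, b, a, rfl⟩ := traceSub_exists_sum hh
  exact ⟨n, biproduct.lift b, biproduct.desc a, by rw [biproduct.lift_desc]⟩

theorem biproduct_factor_mem_traceSub {Z T : C} {n : ℕ}
    (p : 𝟙_ C ⟶ ⨁ (fun _ : Fin n => Z)) (q : (⨁ (fun _ : Fin n => Z)) ⟶ T) :
    p ≫ q ∈ (traceSub (𝟙_ C) ({Z} : Set C)).carrier T := by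
  have hpq : p ≫ q = ∑ j : Fin n,
      (p ≫ biproduct.π (fun _ : Fin n => Z) j) ≫ (biproduct.ι (fun _ : Fin n => Z) j ≫ q) := by
    conv_lhs => rw [← Category.id_comp q, ← biproduct.total]
    rw [Preadditive.sum_comp, Preadditive.comp_sum]
    exact Finset.sum_congr rfl fun j _ => by simp
  rw [hpq]
  exact AddSubgroup.sum_mem _ fun j _ =>
    AddSubgroup.subset_closure ⟨Z, rfl, _, _, rfl⟩

end Gen

section ThickAux

variable [Preadditive C] [HasFiniteBiproducts C]

/-- Peeling off the first summand of a biproduct over `Fin (n+1)`. -/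
noncomputable def biproductSuccIso {n : ℕ} (f : Fin (n + 1) → C) :
    (⨁ f) ≅ f 0 ⊞ (⨁ fun i : Fin n => f i.succ) where
  hom := biprod.lift (biproduct.π f 0) (biproduct.lift fun i => biproduct.π f i.succ)
  inv := biprod.desc (biproduct.ι f 0) (biproduct.desc fun i => biproduct.ι f i.succ)
  hom_inv_id := by
    rw [biprod.lift_desc, biproduct.lift_desc, ← biproduct.total, Fin.sum_univ_succ]
  inv_hom_id := by
    apply biprod.hom_ext'
    · apply biprod.hom_ext
      · simp
      · simp only [Category.assoc, biprod.inl_desc_assoc, biprod.lift_snd, Category.comp_id,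
          biprod.inl_snd]
        apply biproduct.hom_ext
        intro k
        simp [biproduct.ι_π, dif_neg (Fin.succ_ne_zero k).symm]
    · apply biprod.hom_ext
      · simp only [Category.assoc, biprod.inr_desc_assoc, biprod.lift_fst, Category.comp_id,
          biprod.inr_fst]
        apply biproduct.hom_ext'
        intro i
        simp [biproduct.ι_π, dif_neg (Fin.succ_ne_zero i)]
      · simp only [Category.assoc, biprod.inr_desc_assoc, biprod.lift_snd, Category.comp_id,
          biprod.inr_snd]
        apply biproduct.hom_ext'
        intro i
        apply biproduct.hom_ext
        intro k
        by_cases hk : i = k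
        · subst hk; simp [biproduct.ι_π]
        · simp [biproduct.ι_π, dif_neg hk, dif_neg (fun h => hk (Fin.succ_injective _ h))]

variable [MonoidalCategory C]

theorem ThickIdeal.zero_mem (I : ThickIdeal C) {T O : C} (hT : T ∈ I.carrier)
    (hO : IsZero O) : O ∈ I.carrier := by
  have e : T ≅ T ⊞ O := by
    refine ⟨biprod.lift (𝟙 T) 0, biprod.fst, by simp, ?_⟩
    apply biprod.hom_ext
    · simp
    · simp only [Category.assoc, biprod.lift_snd, Limits.comp_zero, Category.id_comp]
      exact (hO.eq_of_tgt _ _)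
  exact ((I.biprod_mem_iff T O).mp (I.iso_mem e hT)).2

theorem ThickIdeal.biproduct_mem (I : ThickIdeal C) (hne : ∃ T, T ∈ I.carrier)
    {n : ℕ} (f : Fin n → C) (hf : ∀ i, f i ∈ I.carrier) : (⨁ f) ∈ I.carrier := by
  induction n with
  | zero =>
    obtain ⟨T, hT⟩ := hne
    exact I.zero_mem hT (isZero_biproduct_empty f)
  | succ n ih =>
    refine I.iso_mem (biproductSuccIso f).symm ?_
    exact (I.biprod_mem_iff _ _).mpr ⟨hf 0, ih _ fun i => hf i.succ⟩

theorem ThickIdeal.mem_of_biproduct_mem (I : ThickIdeal C) {n : ℕ} {f : Fin n → C}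
    (hmem : (⨁ f) ∈ I.carrier) (i : Fin n) : f i ∈ I.carrier := by
  induction n with
  | zero => exact i.elim0
  | succ n ih =>
    have h := I.iso_mem (biproductSuccIso f) hmem
    rw [I.biprod_mem_iff] at h
    induction i using Fin.cases with
    | zero => exact h.1
    | succ i => exact ih h.2 i

end ThickAux

section KSAux

variable {C : Type u} [Category.{v} C]

theorem exists_isUnit_of_sum_eq_one {R : Type v₂} [Ring R] [IsLocalRing R] {ι : Type u₂}
    (s : Finset ι) (g : ι → R) (h : (∑ i ∈ s, g i) = 1) : ∃ i ∈ s, IsUnit (g i) := by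
  classical
  induction s using Finset.induction_on generalizing g with
  | empty =>
    rw [Finset.sum_empty] at h
    exact absurd h zero_ne_one
  | @insert a s ha ih =>
    rw [Finset.sum_insert ha] at h
    rcases IsLocalRing.isUnit_or_isUnit_of_add_one h with h1 | h2
    · exact ⟨a, Finset.mem_insert_self a s, h1⟩
    · obtain ⟨u, hu⟩ := h2
      have hsum : (∑ i ∈ s, g i * ↑u⁻¹) = 1 := by
        rw [← Finset.sum_mul, ← hu, Units.mul_inv]
      obtain ⟨i, hi, hun⟩ := ih _ hsum
      refine ⟨i, Finset.mem_insert_of_mem hi, ?_⟩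
      have := hun.mul u.isUnit
      rwa [Units.inv_mul_cancel_right] at this

variable [Preadditive C] [HasFiniteBiproducts C]

/-- In a Krull-Schmidt category, an indecomposable retract of `M` is isomorphic to one of
the indecomposable summands in any decomposition of `M`. -/
theorem exists_iso_summand (hKS : IsKrullSchmidt C) {A M : C} (hA : Indecomposable A)
    (hs : IsDirectSummand A M) {n : ℕ} {f : Fin n → C} (hf : ∀ i, Indecomposable (f i))
    (e : M ≅ ⨁ f) : ∃ j, Nonempty (A ≅ f j) := by
  obtain ⟨i, r, hir⟩ := hs
  have hir' : (i ≫ e.hom) ≫ (e.inv ≫ r) = 𝟙 A := by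
    simp only [Category.assoc, Iso.hom_inv_id_assoc]
    exact hir
  letI : IsLocalRing (End A) := hKS.local_end A hA
  have hsum : (∑ j : Fin n,
      (((i ≫ e.hom) ≫ biproduct.π f j) ≫ (biproduct.ι f j ≫ (e.inv ≫ r))) : End A) = 1 := by
    have h1 : (∑ j : Fin n,
        (((i ≫ e.hom) ≫ biproduct.π f j) ≫ (biproduct.ι f j ≫ (e.inv ≫ r))))
        = (i ≫ e.hom) ≫ (∑ j : Fin n, biproduct.π f j ≫ biproduct.ι f j) ≫ (e.inv ≫ r) := by
      rw [Preadditive.sum_comp]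
      rw [Preadditive.comp_sum]
      exact Finset.sum_congr rfl fun j _ => by simp
    rw [h1, biproduct.total, Category.id_comp, hir']
    rfl
  obtain ⟨j, -, hu⟩ := exists_isUnit_of_sum_eq_one Finset.univ _ hsum
  set a : A ⟶ f j := (i ≫ e.hom) ≫ biproduct.π f j with ha
  set b : f j ⟶ A := biproduct.ι f j ≫ (e.inv ≫ r) with hb
  obtain ⟨u, hu'⟩ := hu
  have huu : (a ≫ b) ≫ (↑u⁻¹ : End A) = 𝟙 A := by
    have := Units.inv_mul u
    rw [End.mul_def] at this
    rw [hu'] at this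
    exact this
  set b₂ : f j ⟶ A := b ≫ (↑u⁻¹ : End A) with hb₂
  have hab : a ≫ b₂ = 𝟙 A := by rw [hb₂, ← Category.assoc]; exact huu
  set e' : End (f j) := b₂ ≫ a with he'
  have hidem : e' * e' = e' := by
    rw [End.mul_def, he']
    calc (b₂ ≫ a) ≫ b₂ ≫ a = b₂ ≫ (a ≫ b₂) ≫ a := by simp only [Category.assoc]
    _ = b₂ ≫ a := by rw [hab, Category.id_comp]
  letI : IsLocalRing (End (f j)) := hKS.local_end _ (hf j)
  rcases IsLocalRing.isUnit_or_isUnit_of_add_one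
      (a := e') (b := 1 - e') (add_sub_cancel e' 1) with h1 | h2
  · have he1 : e' = 1 := h1.mul_left_cancel (by rw [hidem, mul_one])
    have hba : b₂ ≫ a = 𝟙 (f j) := by rw [← he', he']; exact he1
    exact ⟨j, ⟨⟨a, b₂, hab, hba⟩⟩⟩
  · exfalso
    obtain ⟨v, hv⟩ := h2
    have hva : a ≫ ((1 : End (f j)) - e') = 0 := by
      have hae : a ≫ e' = a := by
        rw [he', ← Category.assoc, hab, Category.id_comp]
      rw [Preadditive.comp_sub, hae]
      have : a ≫ (1 : End (f j)) = a := Category.comp_id a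
      rw [this, sub_self]
    have hvinv : ((1 : End (f j)) - e') ≫ (↑v⁻¹ : End (f j)) = 𝟙 (f j) := by
      have := Units.inv_mul v
      rw [End.mul_def, hv] at this
      exact this
    have ha0 : a = 0 := by
      have h3 : (a ≫ ((1 : End (f j)) - e')) ≫ (↑v⁻¹ : End (f j)) = 0 := by
        rw [hva, Limits.zero_comp]
      rw [Category.assoc, hvinv, Category.comp_id] at h3
      exact h3
    have : 𝟙 A = 0 := by rw [← hab, ha0, Limits.zero_comp]
    exact hA.1 ((IsZero.iff_id_eq_zero A).mpr this)

theorem ThickIdeal.mem_of_retract [MonoidalCategory C] (hKS : IsKrullSchmidt C)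
    (I : ThickIdeal C) {A M : C} (hA : Indecomposable A) (hs : IsDirectSummand A M)
    (hM : M ∈ I.carrier) : A ∈ I.carrier := by
  obtain ⟨n, f, hf, ⟨e⟩⟩ := hKS.decomp M
  obtain ⟨j, ⟨ej⟩⟩ := exists_iso_summand hKS hA hs hf e
  exact I.iso_mem ej.symm (I.mem_of_biproduct_mem (I.iso_mem e hM) j)

end KSAux

end Aux

section Statement

variable (C : Type u) [Category.{v} C] [Preadditive C] [MonoidalCategory C]
  [MonoidalPreadditive C] [HasFiniteBiproducts C]

/-- **Lemma.** Let `C` be a right rigid Krull-Schmidt monoidal category,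
`Z` indecomposable with `C(𝟙,Z) ≠ 0`, and suppose there exists an indecomposable `X` such
that `add(X^∨ ⊗ X) ∩ 𝓑 = {Z}`.  Then:
(i) `co_X` factors as `𝟙 → Z^{⊕k} → X^∨ ⊗ X` for some `k > 0`;
(ii) `Ψ⁻¹(Tr_Z P_𝟙)` is the tensor ideal generated by `1_X`;
(iii) `Ob(Ψ⁻¹(Tr_Z P_𝟙))` is the thick Ob-ideal generated by `X`;
(iv) `Ob(Ψ⁻¹(Tr_Z P_𝟙))` is the thick Ob-ideal generated by `Z`. -/
theorem single_summand_lemma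
    (D : ∀ X : C, RightDual X) (hKS : IsKrullSchmidt C)
    (Z : C) (hZind : Indecomposable Z) (hZB : ∃ φ : 𝟙_ C ⟶ Z, φ ≠ 0)
    (X : C) (hXind : Indecomposable X)
    (hadd : ∀ W : C, Indecomposable W → (∃ φ : 𝟙_ C ⟶ W, φ ≠ 0) →
      (IsDirectSummand W ((D X).dual ⊗ X) ↔ Nonempty (W ≅ Z))) :
    (∃ k : ℕ, 0 < k ∧ ∃ (u : 𝟙_ C ⟶ ⨁ (fun _ : Fin k => Z))
      (v : (⨁ (fun _ : Fin k => Z)) ⟶ (D X).dual ⊗ X), (D X).coev = u ≫ v) ∧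
    (∃ J : TensorIdeal C, Psi J = traceSub (𝟙_ C) {Z}) ∧
    (∀ J : TensorIdeal C, Psi J = traceSub (𝟙_ C) {Z} →
      (𝟙 X ∈ J.carrier X X ∧
        ∀ J' : TensorIdeal C, 𝟙 X ∈ J'.carrier X X → J ≤ J') ∧
      (X ∈ (obIdeal J).carrier ∧
        ∀ I : ThickIdeal C, X ∈ I.carrier → obIdeal J ≤ I) ∧
      (Z ∈ (obIdeal J).carrier ∧
        ∀ I : ThickIdeal C, Z ∈ I.carrier → obIdeal J ≤ I)) := by
  classical
  obtain ⟨iZ, rZ, hiZrZ⟩ : IsDirectSummand Z ((D X).dual ⊗ X) :=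
    (hadd Z hZind hZB).mpr ⟨Iso.refl Z⟩
  -- Part (i)
  have hpart1 : ∃ k : ℕ, 0 < k ∧ ∃ (u : 𝟙_ C ⟶ ⨁ (fun _ : Fin k => Z))
      (v : (⨁ (fun _ : Fin k => Z)) ⟶ (D X).dual ⊗ X), (D X).coev = u ≫ v := by
    obtain ⟨n, f, hf, ⟨e⟩⟩ := hKS.decomp ((D X).dual ⊗ X)
    rcases Nat.eq_zero_or_pos n with rfl | hn
    · exfalso
      have hz : IsZero ((D X).dual ⊗ X) := (isZero_biproduct_empty f).of_iso e
      have hc0 : (D X).coev = 0 := hz.eq_of_tgt _ _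
      have hzig := (D X).zigzag₁
      rw [hc0] at hzig
      simp only [MonoidalPreadditive.whiskerLeft_zero, Limits.zero_comp,
        Limits.comp_zero] at hzig
      exact hXind.1 ((IsZero.iff_id_eq_zero X).mpr hzig.symm)
    · have hcomp : ∀ i : Fin n, ∃ (ui : 𝟙_ C ⟶ Z) (vi : Z ⟶ (D X).dual ⊗ X),
          ui ≫ vi = (D X).coev ≫ e.hom ≫ biproduct.π f i ≫ biproduct.ι f i ≫ e.inv := by
        intro i
        by_cases hzero : ∀ φ : 𝟙_ C ⟶ f i, φ = 0
        · refine ⟨0, 0, ?_⟩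
          have h0 : (D X).coev ≫ e.hom ≫ biproduct.π f i = 0 := hzero _
          rw [Limits.zero_comp,
            show (D X).coev ≫ e.hom ≫ biproduct.π f i ≫ biproduct.ι f i ≫ e.inv
              = ((D X).coev ≫ e.hom ≫ biproduct.π f i) ≫ biproduct.ι f i ≫ e.inv from by
                simp only [Category.assoc],
            h0, Limits.zero_comp]
        · push_neg at hzero
          obtain ⟨φ, hφ⟩ := hzero
          have hsummand : IsDirectSummand (f i) ((D X).dual ⊗ X) :=
            ⟨biproduct.ι f i ≫ e.inv, e.hom ≫ biproduct.π f i, by simp⟩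
          obtain ⟨ei⟩ := (hadd (f i) (hf i) ⟨φ, hφ⟩).mp hsummand
          refine ⟨(D X).coev ≫ e.hom ≫ biproduct.π f i ≫ ei.hom,
            ei.inv ≫ biproduct.ι f i ≫ e.inv, ?_⟩
          simp only [Category.assoc, Iso.hom_inv_id_assoc]
      choose uu vv huv using hcomp
      refine ⟨n, hn, biproduct.lift uu, biproduct.desc vv, ?_⟩
      rw [biproduct.lift_desc]
      calc (D X).coev
          = (D X).coev ≫ e.hom ≫ (∑ i : Fin n, biproduct.π f i ≫ biproduct.ι f i) ≫ e.inv := by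
            rw [biproduct.total]; simp
        _ = ∑ i : Fin n, (D X).coev ≫ e.hom ≫ (biproduct.π f i ≫ biproduct.ι f i) ≫ e.inv := by
            rw [Preadditive.sum_comp, Preadditive.comp_sum, Preadditive.comp_sum]
        _ = ∑ i : Fin n, uu i ≫ vv i :=
            Finset.sum_congr rfl fun i _ => by rw [huv i]; simp only [Category.assoc]
  obtain ⟨k, hk, u, v, huv⟩ := hpart1
  -- Part (ii) : existence
  have hPsi : Psi (idealGen X) = traceSub (𝟙_ C) ({Z} : Set C) := by
    apply Submod.ext'
    funext Y
    apply le_antisymm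
    · intro g hg
      refine (AddSubgroup.closure_le ((traceSub (𝟙_ C) ({Z} : Set C)).carrier Y)).mpr ?_ hg
      rintro x ⟨W, b, a, rfl⟩
      obtain ⟨g', hg'⟩ := (D X).exists_coev_factor b
      rw [← hg', huv]
      simpa only [Category.assoc, SetLike.mem_coe] using
        biproduct_factor_mem_traceSub (Z := Z) u (v ≫ ((g' ▷ X) ≫ a))
    · intro g hg
      refine (AddSubgroup.closure_le ((idealGen X).carrier (𝟙_ C) Y)).mpr ?_ hg
      rintro x ⟨W, hW, b, a, rfl⟩
      rw [Set.mem_singleton_iff] at hW; subst hW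
      apply AddSubgroup.subset_closure
      refine ⟨(D X).dual, b ≫ iZ, rZ ≫ a, ?_⟩
      rw [show (b ≫ iZ) ≫ rZ ≫ a = b ≫ (iZ ≫ rZ) ≫ a from by simp only [Category.assoc],
        hiZrZ, Category.id_comp]
  refine ⟨⟨k, hk, u, v, huv⟩, ⟨idealGen X, hPsi⟩, ?_⟩
  -- Part (iii)/(iv)
  intro J hJ
  have hcar : ∀ T : C, J.carrier (𝟙_ C) T = (traceSub (𝟙_ C) ({Z} : Set C)).carrier T :=
    fun T => congrFun (congrArg Submod.carrier hJ) T
  -- `1_X ∈ J`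
  have hXJ : 𝟙 X ∈ J.carrier X X := by
    have hco : (D X).coev ∈ J.carrier (𝟙_ C) ((D X).dual ⊗ X) := by
      rw [hcar, huv]
      exact biproduct_factor_mem_traceSub u v
    have h3 := J.comp_post ((α_ X (D X).dual X).inv ≫ ((D X).ev ▷ X) ≫ (λ_ X).hom)
      (J.comp_pre (ρ_ X).inv (J.whisker_mem X hco))
    simp only [Category.assoc] at h3
    rwa [(D X).zigzag₁] at h3
  -- trace ≤ J' for any tensor ideal J' containing 1_X
  have htr : ∀ J' : TensorIdeal C, 𝟙 X ∈ J'.carrier X X →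
      ∀ (T : C) (g : 𝟙_ C ⟶ T), g ∈ (traceSub (𝟙_ C) ({Z} : Set C)).carrier T →
        g ∈ J'.carrier (𝟙_ C) T := by
    intro J' hX' T g hg
    have hid : 𝟙 ((D X).dual ⊗ X) ∈ J'.carrier ((D X).dual ⊗ X) ((D X).dual ⊗ X) := by
      have := J'.whisker_mem (D X).dual hX'
      rwa [MonoidalCategory.whiskerLeft_id] at this
    refine (AddSubgroup.closure_le (J'.carrier (𝟙_ C) T)).mpr ?_ hg
    rintro x ⟨W, hW, b, a, rfl⟩
    rw [Set.mem_singleton_iff] at hW; subst hW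
    have h4 := J'.comp_pre (b ≫ iZ) (J'.comp_post (rZ ≫ a) hid)
    rw [Category.id_comp] at h4
    rwa [show (b ≫ iZ) ≫ rZ ≫ a = b ≫ a from by
      rw [show (b ≫ iZ) ≫ rZ ≫ a = b ≫ (iZ ≫ rZ) ≫ a from by simp only [Category.assoc],
        hiZrZ, Category.id_comp]] at h4
  -- minimality among tensor ideals
  have hmin : ∀ J' : TensorIdeal C, 𝟙 X ∈ J'.carrier X X → J ≤ J' := by
    intro J' hX' A B g hgJ
    have h1 : (D A).coev ≫ ((D A).dual ◁ g) ∈ J.carrier (𝟙_ C) ((D A).dual ⊗ B) :=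
      J.comp_pre (D A).coev (J.whisker_mem (D A).dual hgJ)
    rw [hcar] at h1
    have h2 := htr J' hX' _ _ h1
    have h3 := J'.comp_post ((α_ A (D A).dual B).inv ≫ ((D A).ev ▷ B) ≫ (λ_ B).hom)
      (J'.comp_pre (ρ_ A).inv (J'.whisker_mem A h2))
    simp only [Category.assoc] at h3
    rwa [(D A).iota_iotaInv] at h3
  -- the key Ob statement: any thick ideal containing Z contains all of Ob(J)
  have hob : ∀ I : ThickIdeal C, Z ∈ I.carrier → ∀ A : C,
      𝟙 A ∈ J.carrier A A → A ∈ I.carrier := by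
    intro I hZI A hA
    have hco : (D A).coev ∈ (traceSub (𝟙_ C) ({Z} : Set C)).carrier ((D A).dual ⊗ A) := by
      rw [← hcar]
      have := J.comp_pre (D A).coev (J.whisker_mem (D A).dual hA)
      rwa [MonoidalCategory.whiskerLeft_id, Category.comp_id] at this
    obtain ⟨m, p, q, hpq⟩ := traceSub_exists_biproduct_factor hco
    have hzig := (D A).zigzag₁
    rw [hpq, MonoidalCategory.whiskerLeft_comp] at hzig
    have hret : IsDirectSummand A (A ⊗ (⨁ (fun _ : Fin m => Z))) := by
      refine ⟨(ρ_ A).inv ≫ (A ◁ p),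
        (A ◁ q) ≫ (α_ A (D A).dual A).inv ≫ ((D A).ev ▷ A) ≫ (λ_ A).hom, ?_⟩
      simp only [Category.assoc] at hzig ⊢
      exact hzig
    have hAZm : (A ⊗ (⨁ (fun _ : Fin m => Z))) ∈ I.carrier :=
      I.tensor_mem A (I.biproduct_mem ⟨Z, hZI⟩ _ (fun _ => hZI))
    obtain ⟨nA, fA, hfA, ⟨eA⟩⟩ := hKS.decomp A
    obtain ⟨i0, r0, h0⟩ := hret
    have hfAI : ∀ i, fA i ∈ I.carrier := by
      intro i
      apply ThickIdeal.mem_of_retract hKS I (hfA i) ?_ hAZm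
      refine ⟨(biproduct.ι fA i ≫ eA.inv) ≫ i0, r0 ≫ (eA.hom ≫ biproduct.π fA i), ?_⟩
      have h1 : biproduct.ι fA i ≫ eA.inv ≫ i0 ≫ r0 ≫ eA.hom ≫ biproduct.π fA i
          = 𝟙 (fA i) := by
        rw [reassoc_of% h0]
        simp
      simpa only [Category.assoc] using h1
    exact I.iso_mem eA.symm (I.biproduct_mem ⟨Z, hZI⟩ fA hfAI)
  have hXob : X ∈ (obIdeal J).carrier := hXJ
  have hZob : Z ∈ (obIdeal J).carrier :=
    ThickIdeal.mem_of_retract hKS (obIdeal J) hZind ⟨iZ, rZ, hiZrZ⟩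
      ((obIdeal J).tensor_mem (D X).dual hXob)
  refine ⟨⟨hXJ, hmin⟩, ⟨hXob, ?_⟩, hZob, fun I hZI A hA => hob I hZI A hA⟩
  intro I hXI
  have hZI : Z ∈ I.carrier :=
    ThickIdeal.mem_of_retract hKS I hZind ⟨iZ, rZ, hiZrZ⟩ (I.tensor_mem (D X).dual hXI)
  exact fun A hA => hob I hZI A hA

end Statement

end TIP
end

section
/- Fix a, b ∈ ℕ and partitions λ, μ. (i) If the Littlewood–Richardson coefficient c^ν_{λμ} is nonzero for some partition ν containing the rectangle (b^a), then λ_i + μ_{a+1-i} ≥ b for all 1 ≤ i ≤ a, and equivalently λ^t_j + μ^t_{b+1-j} ≥ a for all 1 ≤ j ≤ b. (ii) If |λ| + |μ| = ab, then c^{(b^a)}_{λμ} = 1 if λ and μ are a×b-dual, and c^{(b^a)}_{λμ} = 0 otherwise. -/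
namespace LRPaper

/-- The rectangular Young diagram `(b^a)` with `a` rows, each of length `b`. -/
def rect (a b : ℕ) : YoungDiagram where
  cells := Finset.range a ×ˢ Finset.range b
  isLowerSet := by
    intro p q hqp hp
    simp only [Finset.coe_product, Set.mem_prod, Finset.mem_coe, Finset.mem_range] at hp ⊢
    obtain ⟨h1, h2⟩ := hqp
    exact ⟨lt_of_le_of_lt h1 hp.1, lt_of_le_of_lt h2 hp.2⟩

/-- `c` is a cell of the skew shape `ν / λ`. -/
def IsSkewCell (ν lam : YoungDiagram) (c : ℕ × ℕ) : Prop := c ∈ ν ∧ c ∉ lam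

/-- A Littlewood-Richardson filling of the skew shape `ν / λ` of content `μ`:
a semistandard filling (entries `≥ 1` on the skew cells, `0` elsewhere, rows weakly
increasing, columns strictly increasing) such that for each `k ≥ 1` exactly `μ_k`
entries are equal to `k`, satisfying the lattice-word (ballot) condition: in every
prefix of the reverse reading word (each row read right to left, rows read top to
bottom) the value `k` occurs at least as often as `k + 1`. -/
def IsLRFilling (lam mu ν : YoungDiagram) (T : ℕ × ℕ → ℕ) : Prop :=
  lam ≤ ν ∧
  (∀ c : ℕ × ℕ, ¬ IsSkewCell ν lam c → T c = 0) ∧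
  (∀ c : ℕ × ℕ, IsSkewCell ν lam c → 1 ≤ T c) ∧
  (∀ i j1 j2 : ℕ, j1 ≤ j2 → IsSkewCell ν lam (i, j1) → IsSkewCell ν lam (i, j2) →
    T (i, j1) ≤ T (i, j2)) ∧
  (∀ i1 i2 j : ℕ, i1 < i2 → IsSkewCell ν lam (i1, j) → IsSkewCell ν lam (i2, j) →
    T (i1, j) < T (i2, j)) ∧
  (∀ k : ℕ, 1 ≤ k → {c : ℕ × ℕ | IsSkewCell ν lam c ∧ T c = k}.ncard = mu.rowLen (k - 1)) ∧
  (∀ k : ℕ, 1 ≤ k → ∀ i j : ℕ,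
    {c : ℕ × ℕ | IsSkewCell ν lam c ∧ (c.1 < i ∨ (c.1 = i ∧ j ≤ c.2)) ∧ T c = k + 1}.ncard ≤
    {c : ℕ × ℕ | IsSkewCell ν lam c ∧ (c.1 < i ∨ (c.1 = i ∧ j ≤ c.2)) ∧ T c = k}.ncard)

/-- The Littlewood-Richardson coefficient `c^ν_{λμ}`, the number of
Littlewood-Richardson fillings of `ν / λ` of content `μ`. -/
noncomputable def lrCoeff (lam mu ν : YoungDiagram) : ℕ :=
  {T : ℕ × ℕ → ℕ | IsLRFilling lam mu ν T}.ncard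

/-- The partitions `λ` and `μ` are `a × b`-dual:
`λ_i + μ_{a+1-i} = b` for `1 ≤ i ≤ a`, and `λ_{a+1} = 0 = μ_{a+1}`
(rows are `1`-indexed, so `λ_i` is `lam.rowLen (i-1)`). -/
def IsMutuallyDual (a b : ℕ) (lam mu : YoungDiagram) : Prop :=
  (∀ i : ℕ, 1 ≤ i → i ≤ a → lam.rowLen (i - 1) + mu.rowLen (a - i) = b) ∧
  lam.rowLen a = 0 ∧ mu.rowLen a = 0

/-! ### Auxiliary lemmas for part (i) -/

section Aux

variable {lam mu ν : YoungDiagram} {T : ℕ × ℕ → ℕ}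

lemma mem_rect' {a b i j : ℕ} : (i, j) ∈ rect a b ↔ i < a ∧ j < b := by
  rw [← YoungDiagram.mem_cells]
  show (i, j) ∈ Finset.range a ×ˢ Finset.range b ↔ _
  simp [Finset.mem_product]

lemma fin_sub (S : Set (ℕ × ℕ)) (h : ∀ x ∈ S, IsSkewCell ν lam x) : S.Finite :=
  Set.Finite.subset ν.cells.finite_toSet
    (fun x hx => Finset.mem_coe.mpr ((YoungDiagram.mem_cells x).mpr (h x hx).1))

lemma chain (hT : IsLRFilling lam mu ν T) {c : ℕ} :
    ∀ (n : ℕ) {r1 r2 : ℕ}, r2 = r1 + n → IsSkewCell ν lam (r1, c) →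
      IsSkewCell ν lam (r2, c) → T (r1, c) + n ≤ T (r2, c) := by
  intro n
  induction n with
  | zero =>
    intro r1 r2 h _ _
    subst h
    omega
  | succ m ih =>
    intro r1 r2 h h1 h2
    have hmid : IsSkewCell ν lam (r1 + m, c) := by
      constructor
      · exact ν.up_left_mem (by omega) le_rfl h2.1
      · intro hc
        exact h1.2 (lam.up_left_mem (by omega) le_rfl hc)
    have h5 := hT.2.2.2.2.1 (r1 + m) r2 c (by omega) hmid h2
    have h6 := ih rfl h1 hmid
    omega

lemma valueBound (hT : IsLRFilling lam mu ν T) :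
    ∀ i j : ℕ, IsSkewCell ν lam (i, j) → T (i, j) ≤ i + 1 := by
  intro i
  induction i using Nat.strong_induction_on with
  | _ i ih =>
    intro j hij
    by_contra hgt
    push_neg at hgt
    set k := T (i, j) - 1 with hk
    have hk1 : 1 ≤ k := by omega
    have hb := hT.2.2.2.2.2.2 k hk1 i j
    have hfin1 : {c : ℕ × ℕ | IsSkewCell ν lam c ∧ (c.1 < i ∨ (c.1 = i ∧ j ≤ c.2)) ∧
        T c = k + 1}.Finite := fin_sub _ (fun x hx => hx.1)
    have hmem : (i, j) ∈ {c : ℕ × ℕ | IsSkewCell ν lam c ∧ (c.1 < i ∨ (c.1 = i ∧ j ≤ c.2)) ∧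
        T c = k + 1} := ⟨hij, Or.inr ⟨rfl, le_rfl⟩, by omega⟩
    have h1 : 0 < {c : ℕ × ℕ | IsSkewCell ν lam c ∧ (c.1 < i ∨ (c.1 = i ∧ j ≤ c.2)) ∧
        T c = k + 1}.ncard := (Set.ncard_pos hfin1).mpr ⟨_, hmem⟩
    have h2 : {c : ℕ × ℕ | IsSkewCell ν lam c ∧ (c.1 < i ∨ (c.1 = i ∧ j ≤ c.2)) ∧
        T c = k}.ncard ≠ 0 := by omega
    obtain ⟨⟨i', j'⟩, hsk, hpre, hval⟩ := Set.nonempty_of_ncard_ne_zero h2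
    rcases hpre with h | ⟨hi, hj⟩
    · have := ih i' h j' hsk
      omega
    · simp only at hi hj
      subst hi
      have := hT.2.2.2.1 i' j j' hj hij hsk
      omega

lemma segment_aux (hT : IsLRFilling lam mu ν T) (r0 c1 : ℕ) :
    ∀ (n k d : ℕ), 1 ≤ k → r0 + 2 ≤ k + n →
      (∀ c, d ≤ c → c < c1 → IsSkewCell ν lam (r0, c) ∧ k ≤ T (r0, c)) →
      c1 - d ≤ {x : ℕ × ℕ | IsSkewCell ν lam x ∧ (x.1 < r0 ∨ (x.1 = r0 ∧ d ≤ x.2)) ∧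
        T x = k}.ncard := by
  intro n
  induction n with
  | zero =>
    intro k d hk hn hc
    rcases Nat.lt_or_ge d c1 with h | h
    · exfalso
      obtain ⟨hsk, hkT⟩ := hc d le_rfl h
      have := valueBound hT r0 d hsk
      omega
    · omega
  | succ m ih =>
    intro k d hk hn hc
    rcases Nat.lt_or_ge d c1 with hdc | hdc
    swap
    · omega
    have hfinA : {x : ℕ × ℕ | IsSkewCell ν lam x ∧ (x.1 < r0 ∨ (x.1 = r0 ∧ d ≤ x.2)) ∧
        T x = k}.Finite := fin_sub _ (fun x hx => hx.1)
    by_cases hS : ∃ c, (d ≤ c ∧ c < c1) ∧ k + 1 ≤ T (r0, c)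
    · set d0 := sInf {c : ℕ | (d ≤ c ∧ c < c1) ∧ k + 1 ≤ T (r0, c)} with hd0def
      have hd0S : d0 ∈ {c : ℕ | (d ≤ c ∧ c < c1) ∧ k + 1 ≤ T (r0, c)} := Nat.sInf_mem hS
      obtain ⟨⟨hdd0, hd0c1⟩, hTd0⟩ := hd0S
      have hc' : ∀ c, d0 ≤ c → c < c1 → IsSkewCell ν lam (r0, c) ∧ k + 1 ≤ T (r0, c) := by
        intro c h1 h2
        obtain ⟨hsk, _⟩ := hc c (le_trans hdd0 h1) h2
        exact ⟨hsk, le_trans hTd0 (hT.2.2.2.1 r0 d0 c h1 (hc d0 hdd0 hd0c1).1 hsk)⟩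
      have hIH := ih (k + 1) d0 (by omega) (by omega) hc'
      have hball := hT.2.2.2.2.2.2 k hk r0 d0
      have hBA : {x : ℕ × ℕ | IsSkewCell ν lam x ∧ (x.1 < r0 ∨ (x.1 = r0 ∧ d0 ≤ x.2)) ∧ T x = k}
          ⊆ {x : ℕ × ℕ | IsSkewCell ν lam x ∧ (x.1 < r0 ∨ (x.1 = r0 ∧ d ≤ x.2)) ∧ T x = k} := by
        rintro x ⟨hsk, hpre, hv⟩
        refine ⟨hsk, ?_, hv⟩
        rcases hpre with h | ⟨h1, h2⟩
        · exact Or.inl h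
        · exact Or.inr ⟨h1, by omega⟩
      have hCA : (Prod.mk r0) '' (Set.Ico d d0)
          ⊆ {x : ℕ × ℕ | IsSkewCell ν lam x ∧ (x.1 < r0 ∨ (x.1 = r0 ∧ d ≤ x.2)) ∧ T x = k} := by
        rintro x ⟨c, ⟨hc1, hc2⟩, rfl⟩
        have hcc1 : c < c1 := by omega
        obtain ⟨hsk, hkT⟩ := hc c hc1 hcc1
        have hnotS : c ∉ {c : ℕ | (d ≤ c ∧ c < c1) ∧ k + 1 ≤ T (r0, c)} :=
          Nat.notMem_of_lt_sInf hc2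
        simp only [Set.mem_setOf_eq, not_and, not_le] at hnotS
        have : T (r0, c) < k + 1 := hnotS ⟨hc1, hcc1⟩
        exact ⟨hsk, Or.inr ⟨rfl, hc1⟩, by omega⟩
      have hdisj : Disjoint
          {x : ℕ × ℕ | IsSkewCell ν lam x ∧ (x.1 < r0 ∨ (x.1 = r0 ∧ d0 ≤ x.2)) ∧ T x = k}
          ((Prod.mk r0) '' (Set.Ico d d0)) := by
        rw [Set.disjoint_left]
        rintro x ⟨_, hpre, _⟩ ⟨c, ⟨_, hc2⟩, rfl⟩
        rcases hpre with h | ⟨_, h2⟩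
        · exact absurd h (lt_irrefl r0)
        · exact absurd h2 (not_le.mpr hc2)
      have hfinB := hfinA.subset hBA
      have hfinC := hfinA.subset hCA
      have hCcard : ((Prod.mk r0) '' (Set.Ico d d0)).ncard = d0 - d := by
        rw [Set.ncard_image_of_injective _ (fun x y h => by simpa using h)]
        rw [← Finset.coe_Ico, Set.ncard_coe_finset, Nat.card_Ico]
      have hunion := Set.ncard_union_eq hdisj hfinB hfinC
      have hle := Set.ncard_le_ncard (Set.union_subset hBA hCA) hfinA
      omega
    · push_neg at hS
      have hCA : (Prod.mk r0) '' (Set.Ico d c1)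
          ⊆ {x : ℕ × ℕ | IsSkewCell ν lam x ∧ (x.1 < r0 ∨ (x.1 = r0 ∧ d ≤ x.2)) ∧ T x = k} := by
        rintro x ⟨c, ⟨hc1, hc2⟩, rfl⟩
        obtain ⟨hsk, hkT⟩ := hc c hc1 hc2
        have := hS c ⟨hc1, hc2⟩
        exact ⟨hsk, Or.inr ⟨rfl, hc1⟩, by omega⟩
      have hCcard : ((Prod.mk r0) '' (Set.Ico d c1)).ncard = c1 - d := by
        rw [Set.ncard_image_of_injective _ (fun x y h => by simpa using h)]
        rw [← Finset.coe_Ico, Set.ncard_coe_finset, Nat.card_Ico]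
      have hle := Set.ncard_le_ncard hCA hfinA
      omega

lemma segment (hT : IsLRFilling lam mu ν T) {r0 d c1 k : ℕ} (hk : 1 ≤ k)
    (hc : ∀ c, d ≤ c → c < c1 → IsSkewCell ν lam (r0, c) ∧ k ≤ T (r0, c)) :
    c1 - d ≤ mu.rowLen (k - 1) := by
  have h1 := segment_aux hT r0 c1 (r0 + 2) k d hk (by omega) hc
  have h2 : {x : ℕ × ℕ | IsSkewCell ν lam x ∧ (x.1 < r0 ∨ (x.1 = r0 ∧ d ≤ x.2)) ∧ T x = k}
      ⊆ {c : ℕ × ℕ | IsSkewCell ν lam c ∧ T c = k} := fun x hx => ⟨hx.1, hx.2.2⟩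
  have h3 := Set.ncard_le_ncard h2 (fin_sub _ fun x hx => hx.1)
  have h4 := hT.2.2.2.2.2.1 k hk
  omega

lemma part_i_row {a b : ℕ} (hT : IsLRFilling lam mu ν T) (hrect : rect a b ≤ ν)
    {i : ℕ} (h1 : 1 ≤ i) (h2 : i ≤ a) : b ≤ lam.rowLen (i - 1) + mu.rowLen (a - i) := by
  set L := lam.rowLen (i - 1) with hL
  rcases Nat.lt_or_ge L b with hLb | hLb
  swap
  · omega
  have key : ∀ c, L ≤ c → c < b →
      IsSkewCell ν lam (a - 1, c) ∧ (a - i + 1) ≤ T (a - 1, c) := by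
    intro c hc1 hc2
    have hskew : ∀ r, i - 1 ≤ r → r < a → IsSkewCell ν lam (r, c) := by
      intro r hr1 hr2
      refine ⟨SetLike.le_def.mp hrect (mem_rect'.mpr ⟨hr2, hc2⟩), fun hmemlam => ?_⟩
      have hlt : c < lam.rowLen r := YoungDiagram.mem_iff_lt_rowLen.mp hmemlam
      have hanti : lam.rowLen r ≤ L := hL ▸ lam.rowLen_anti (i - 1) r hr1
      omega
    have hs1 := hskew (i - 1) le_rfl (by omega)
    have hs2 := hskew (a - 1) (by omega) (by omega)
    have hch := chain hT (a - i) (by omega : a - 1 = i - 1 + (a - i)) hs1 hs2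
    have hpos := hT.2.2.1 _ hs1
    exact ⟨hs2, by omega⟩
  have hseg := segment hT (show 1 ≤ a - i + 1 by omega) key
  have he : a - i + 1 - 1 = a - i := by omega
  rw [he] at hseg
  omega

lemma part_i_col {a b : ℕ} (hT : IsLRFilling lam mu ν T) (hrect : rect a b ≤ ν)
    {j : ℕ} (h1 : 1 ≤ j) (h2 : j ≤ b) :
    a ≤ lam.transpose.rowLen (j - 1) + mu.transpose.rowLen (b - j) := by
  rw [YoungDiagram.rowLen_transpose, YoungDiagram.rowLen_transpose]
  set K := lam.colLen (j - 1) with hK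
  rcases Nat.lt_or_ge K a with hKa | hKa
  swap
  · omega
  have key : ∀ c, j - 1 ≤ c → c < b →
      IsSkewCell ν lam (a - 1, c) ∧ (a - K) ≤ T (a - 1, c) := by
    intro c hc1 hc2
    have hKc : lam.colLen c ≤ K := hK ▸ lam.colLen_anti (j - 1) c hc1
    have hskew : ∀ r, lam.colLen c ≤ r → r < a → IsSkewCell ν lam (r, c) := by
      intro r hr1 hr2
      refine ⟨SetLike.le_def.mp hrect (mem_rect'.mpr ⟨hr2, hc2⟩), fun hm => ?_⟩
      have := YoungDiagram.mem_iff_lt_colLen.mp hm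
      omega
    have hs1 := hskew (lam.colLen c) le_rfl (by omega)
    have hs2 := hskew (a - 1) (by omega) (by omega)
    have hch := chain hT (a - 1 - lam.colLen c)
      (by omega : a - 1 = lam.colLen c + (a - 1 - lam.colLen c)) hs1 hs2
    have hpos := hT.2.2.1 _ hs1
    exact ⟨hs2, by omega⟩
  have hseg := segment hT (show 1 ≤ a - K by omega) key
  have hcol : a - K ≤ mu.colLen (b - j) := by
    have hmm : (a - K - 1, b - j) ∈ mu := YoungDiagram.mem_iff_lt_rowLen.mpr (by omega)
    have := YoungDiagram.mem_iff_lt_colLen.mp hmm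
    omega
  omega

end Aux

/-! ### Auxiliary lemmas for part (ii) -/

section PartII

variable {lam mu : YoungDiagram} {T : ℕ × ℕ → ℕ} {a b : ℕ}

lemma card_eq_sum (lam : YoungDiagram) {a : ℕ} (h : lam.rowLen a = 0) :
    lam.card = ∑ i ∈ Finset.range a, lam.rowLen i := by
  have hmaps : ∀ x ∈ lam.cells, x.1 ∈ Finset.range a := by
    rintro ⟨x1, x2⟩ hx
    have hx' : (x1, x2) ∈ lam := (YoungDiagram.mem_cells _).mp hx
    have h2 : x2 < lam.rowLen x1 := YoungDiagram.mem_iff_lt_rowLen.mp hx'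
    rw [Finset.mem_range]
    by_contra hcon
    push_neg at hcon
    have := lam.rowLen_anti a x1 hcon
    omega
  have hcard := Finset.card_eq_sum_card_fiberwise hmaps
  rw [show lam.card = lam.cells.card from rfl, hcard]
  refine Finset.sum_congr rfl fun i _ => ?_
  rw [lam.rowLen_eq_card]
  congr 1

lemma skew_mem_sdiff {x : ℕ × ℕ} :
    x ∈ (rect a b).cells \ lam.cells ↔ IsSkewCell (rect a b) lam x := by
  rw [Finset.mem_sdiff, IsSkewCell, YoungDiagram.mem_cells, YoungDiagram.mem_cells]

lemma sum_values (hT : IsLRFilling lam mu (rect a b) T) :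
    ∑ x ∈ (rect a b).cells \ lam.cells, T x
      = ∑ k ∈ Finset.range (a + 1), k * mu.rowLen (k - 1) := by
  have hmem : ∀ x ∈ (rect a b).cells \ lam.cells, T x ∈ Finset.range (a + 1) := by
    rintro ⟨x1, x2⟩ hx
    have hsk : IsSkewCell (rect a b) lam (x1, x2) := skew_mem_sdiff.mp hx
    have hb := valueBound hT x1 x2 hsk
    have hxa : x1 < a := (mem_rect'.mp hsk.1).1
    rw [Finset.mem_range]
    omega
  rw [← Finset.sum_fiberwise_of_maps_to hmem T]
  refine Finset.sum_congr rfl fun k hk => ?_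
  have hinner : ∑ x ∈ ((rect a b).cells \ lam.cells).filter (fun x => T x = k), T x
      = k * (((rect a b).cells \ lam.cells).filter (fun x => T x = k)).card := by
    rw [Finset.sum_congr rfl (fun x hx => (Finset.mem_filter.mp hx).2), Finset.sum_const,
      smul_eq_mul, mul_comm]
  rw [hinner]
  rcases Nat.eq_zero_or_pos k with hk0 | hkpos
  · subst hk0; simp
  · congr 1
    have hcont := hT.2.2.2.2.2.1 k hkpos
    rw [← hcont, ← Set.ncard_coe_finset]
    congr 1
    ext x
    simp only [Finset.coe_filter, Set.mem_setOf_eq, Finset.mem_sdiff, YoungDiagram.mem_cells,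
      IsSkewCell]

open Classical in
/-- The canonical LR filling of `rect a b / lam`. -/
noncomputable def T0 (a b : ℕ) (lam : YoungDiagram) : ℕ × ℕ → ℕ := fun x =>
  if IsSkewCell (rect a b) lam x then x.1 + 1 - lam.colLen x.2 else 0

lemma T0_skew {x : ℕ × ℕ} (hx : IsSkewCell (rect a b) lam x) :
    T0 a b lam x = x.1 + 1 - lam.colLen x.2 := by
  rw [T0, if_pos hx]

lemma skew_facts {x : ℕ × ℕ} (hx : IsSkewCell (rect a b) lam x) :
    lam.colLen x.2 ≤ x.1 ∧ x.1 < a ∧ x.2 < b := by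
  rcases x with ⟨x1, x2⟩
  have h1 := mem_rect'.mp hx.1
  have h2 : ¬ x1 < lam.colLen x2 := fun h => hx.2 (YoungDiagram.mem_iff_lt_colLen.mpr h)
  show lam.colLen x2 ≤ x1 ∧ x1 < a ∧ x2 < b
  exact ⟨by omega, h1.1, h1.2⟩

lemma dual_le_rect (hd : IsMutuallyDual a b lam mu) : lam ≤ rect a b := by
  obtain ⟨hdeq, hla, hma⟩ := hd
  rw [← YoungDiagram.cells_subset_iff]
  rintro ⟨x1, x2⟩ hx
  have hx' : (x1, x2) ∈ lam := (YoungDiagram.mem_cells _).mp hx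
  have h2 : x2 < lam.rowLen x1 := YoungDiagram.mem_iff_lt_rowLen.mp hx'
  have hx1a : x1 < a := by
    by_contra hcon
    push_neg at hcon
    have := lam.rowLen_anti a x1 hcon
    omega
  have heq := hdeq (x1 + 1) (by omega) (by omega)
  have he : x1 + 1 - 1 = x1 := by omega
  rw [he] at heq
  rw [YoungDiagram.mem_cells]
  exact mem_rect'.mpr ⟨hx1a, by omega⟩

lemma T0_filling (hd : IsMutuallyDual a b lam mu) :
    IsLRFilling lam mu (rect a b) (T0 a b lam) := by
  obtain ⟨hdeq, hla, hma⟩ := hd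
  refine ⟨dual_le_rect ⟨hdeq, hla, hma⟩, fun c hc => by rw [T0, if_neg hc], ?_, ?_, ?_, ?_, ?_⟩
  · intro c hc
    obtain ⟨h1, _, _⟩ := skew_facts hc
    rw [T0_skew hc]
    omega
  · intro i j1 j2 hj h1 h2
    have ha1 : lam.colLen j1 ≤ i := (skew_facts h1).1
    have ha2 : lam.colLen j2 ≤ i := (skew_facts h2).1
    have hanti := lam.colLen_anti j1 j2 hj
    rw [T0_skew h1, T0_skew h2]
    show i + 1 - lam.colLen j1 ≤ i + 1 - lam.colLen j2
    omega
  · intro i1 i2 j hi h1 h2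
    have ha1 : lam.colLen j ≤ i1 := (skew_facts h1).1
    have ha2 : lam.colLen j ≤ i2 := (skew_facts h2).1
    rw [T0_skew h1, T0_skew h2]
    show i1 + 1 - lam.colLen j < i2 + 1 - lam.colLen j
    omega
  · intro k hk
    rcases Nat.lt_or_ge a k with hak | hak
    · have hempty : {c : ℕ × ℕ | IsSkewCell (rect a b) lam c ∧ T0 a b lam c = k} = ∅ := by
        ext x
        simp only [Set.mem_setOf_eq, Set.mem_empty_iff_false, iff_false, not_and]
        intro hsk
        obtain ⟨h1, h2, h3⟩ := skew_facts hsk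
        rw [T0_skew hsk]
        omega
      rw [hempty, Set.ncard_empty]
      have := mu.rowLen_anti a (k - 1) (by omega)
      omega
    · have himg : {c : ℕ × ℕ | IsSkewCell (rect a b) lam c ∧ T0 a b lam c = k}
          = (fun c => (k - 1 + lam.colLen c, c)) ''
              ↑((Finset.range b).filter (fun c => lam.colLen c ≤ a - k)) := by
        ext x
        simp only [Set.mem_setOf_eq, Set.mem_image, Finset.coe_filter, Finset.mem_range]
        constructor
        · rintro ⟨hsk, hv⟩
          obtain ⟨h1, h2, h3⟩ := skew_facts hsk
          rw [T0_skew hsk] at hv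
          refine ⟨x.2, ⟨h3, by omega⟩, ?_⟩
          have hx1 : k - 1 + lam.colLen x.2 = x.1 := by omega
          rw [hx1]
        · rintro ⟨c, ⟨hcb, hcl⟩, heq⟩
          have hsk : IsSkewCell (rect a b) lam (k - 1 + lam.colLen c, c) := by
            constructor
            · exact mem_rect'.mpr ⟨by omega, hcb⟩
            · intro hm
              have := YoungDiagram.mem_iff_lt_colLen.mp hm
              omega
          have hval : T0 a b lam (k - 1 + lam.colLen c, c) = k := by
            rw [T0_skew hsk]
            show k - 1 + lam.colLen c + 1 - lam.colLen c = k
            omega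
          rw [← heq]
          exact ⟨hsk, hval⟩
      rw [himg, Set.ncard_image_of_injective _
          (fun x y h => by simpa using congrArg Prod.snd h), Set.ncard_coe_finset]
      have heq := hdeq (a - k + 1) (by omega) (by omega)
      have e1 : a - k + 1 - 1 = a - k := by omega
      have e2 : a - (a - k + 1) = k - 1 := by omega
      rw [e1, e2] at heq
      have hneg : (Finset.range b).filter (fun c => ¬ lam.colLen c ≤ a - k)
          = Finset.range (lam.rowLen (a - k)) := by
        ext c
        simp only [Finset.mem_filter, Finset.mem_range, not_le]
        constructor
        · rintro ⟨hcb, hcl⟩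
          exact YoungDiagram.mem_iff_lt_rowLen.mp (YoungDiagram.mem_iff_lt_colLen.mpr hcl)
        · intro hc
          have hm := YoungDiagram.mem_iff_lt_rowLen.mpr hc
          exact ⟨by omega, YoungDiagram.mem_iff_lt_colLen.mp hm⟩
      have htot := Finset.card_filter_add_card_filter_not
        (s := Finset.range b) (p := fun c => lam.colLen c ≤ a - k)
      rw [hneg, Finset.card_range, Finset.card_range] at htot
      omega
  · intro k hk i j
    refine Set.ncard_le_ncard_of_injOn (fun x => (x.1 - 1, x.2)) ?_ ?_
      (fin_sub _ fun x hx => hx.1)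
    · rintro ⟨x1, x2⟩ ⟨hsk, hpre, hv⟩
      have h1 : lam.colLen x2 ≤ x1 := (skew_facts hsk).1
      have h2 : x1 < a := (skew_facts hsk).2.1
      have h3 : x2 < b := (skew_facts hsk).2.2
      have hv' : x1 + 1 - lam.colLen x2 = k + 1 := by rw [T0_skew hsk] at hv; exact hv
      have hpre' : x1 < i ∨ (x1 = i ∧ j ≤ x2) := hpre
      have hsk' : IsSkewCell (rect a b) lam (x1 - 1, x2) := by
        constructor
        · exact mem_rect'.mpr ⟨by omega, h3⟩
        · intro hm
          have := YoungDiagram.mem_iff_lt_colLen.mp hm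
          omega
      have hval : T0 a b lam (x1 - 1, x2) = k := by
        rw [T0_skew hsk']
        show x1 - 1 + 1 - lam.colLen x2 = k
        omega
      have hlt : x1 - 1 < i := by omega
      exact ⟨hsk', Or.inl hlt, hval⟩
    · rintro ⟨x1, x2⟩ ⟨hsk, -, hv⟩ ⟨y1, y2⟩ ⟨hsk2, -, hv2⟩ heq
      have h1 : lam.colLen x2 ≤ x1 := (skew_facts hsk).1
      have h1' : lam.colLen y2 ≤ y1 := (skew_facts hsk2).1
      have hv' : x1 + 1 - lam.colLen x2 = k + 1 := by rw [T0_skew hsk] at hv; exact hv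
      have hv2' : y1 + 1 - lam.colLen y2 = k + 1 := by rw [T0_skew hsk2] at hv2; exact hv2
      have heq' : (x1 - 1, x2) = (y1 - 1, y2) := heq
      have he2 : x2 = y2 := congrArg Prod.snd heq'
      subst he2
      have hx1 : x1 = y1 := by omega
      rw [hx1]

lemma filling_eq_T0 (hd : IsMutuallyDual a b lam mu)
    (hT : IsLRFilling lam mu (rect a b) T) : T = T0 a b lam := by
  have hT0 := T0_filling hd
  have hsum : ∑ x ∈ (rect a b).cells \ lam.cells, T0 a b lam x
      = ∑ x ∈ (rect a b).cells \ lam.cells, T x := (sum_values hT0).trans (sum_values hT).symm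
  have hpt : ∀ x ∈ (rect a b).cells \ lam.cells, T0 a b lam x ≤ T x := by
    rintro ⟨x1, x2⟩ hx
    have hsk : IsSkewCell (rect a b) lam (x1, x2) := skew_mem_sdiff.mp hx
    have h1 : lam.colLen x2 ≤ x1 := (skew_facts hsk).1
    have h2 : x1 < a := (skew_facts hsk).2.1
    have h3 : x2 < b := (skew_facts hsk).2.2
    have hs1 : IsSkewCell (rect a b) lam (lam.colLen x2, x2) := by
      constructor
      · exact mem_rect'.mpr ⟨by omega, h3⟩
      · intro hm
        exact absurd (YoungDiagram.mem_iff_lt_colLen.mp hm) (lt_irrefl _)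
    have hch := chain hT (x1 - lam.colLen x2)
      (by omega : x1 = lam.colLen x2 + (x1 - lam.colLen x2)) hs1 hsk
    have hpos := hT.2.2.1 _ hs1
    rw [T0_skew hsk]
    show x1 + 1 - lam.colLen x2 ≤ T (x1, x2)
    omega
  have heq : ∀ x ∈ (rect a b).cells \ lam.cells, T x = T0 a b lam x := by
    by_contra hcon
    push_neg at hcon
    obtain ⟨x, hx, hne⟩ := hcon
    have hlt : T0 a b lam x < T x := lt_of_le_of_ne (hpt x hx) (fun h => hne h.symm)
    have := Finset.sum_lt_sum hpt ⟨x, hx, hlt⟩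
    omega
  funext x
  by_cases hx : IsSkewCell (rect a b) lam x
  · exact heq x (skew_mem_sdiff.mpr hx)
  · rw [hT.2.1 x hx, hT0.2.1 x hx]

lemma dual_of_filling (hcard : lam.card + mu.card = a * b)
    (hT : IsLRFilling lam mu (rect a b) T) : IsMutuallyDual a b lam mu := by
  have hle := hT.1
  have hlam0 : lam.rowLen a = 0 := by
    by_contra h
    have hm : (a, 0) ∈ lam := YoungDiagram.mem_iff_lt_rowLen.mpr (Nat.pos_of_ne_zero h)
    have := (mem_rect'.mp (SetLike.le_def.mp hle hm)).1
    omega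
  have hmu0 : mu.rowLen a = 0 := by
    have hc := hT.2.2.2.2.2.1 (a + 1) (by omega)
    have hempty : {c : ℕ × ℕ | IsSkewCell (rect a b) lam c ∧ T c = a + 1} = ∅ := by
      ext ⟨x1, x2⟩
      simp only [Set.mem_setOf_eq, Set.mem_empty_iff_false, iff_false, not_and]
      intro hsk
      have h1 : x1 < a := (mem_rect'.mp hsk.1).1
      have h2 := valueBound hT x1 x2 hsk
      omega
    rw [hempty, Set.ncard_empty] at hc
    simpa using hc.symm
  have hlc := card_eq_sum lam hlam0
  have hmc := card_eq_sum mu hmu0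
  have hge : ∀ i ∈ Finset.range a, b ≤ lam.rowLen i + mu.rowLen (a - 1 - i) := by
    intro i hi
    rw [Finset.mem_range] at hi
    have h := part_i_row hT (le_refl (rect a b)) (i := i + 1) (by omega) (by omega)
    have e1 : i + 1 - 1 = i := by omega
    have e2 : a - (i + 1) = a - 1 - i := by omega
    rwa [e1, e2] at h
  have hsum : ∑ i ∈ Finset.range a, (lam.rowLen i + mu.rowLen (a - 1 - i)) = a * b := by
    rw [Finset.sum_add_distrib, Finset.sum_range_reflect (fun i => mu.rowLen i) a]
    omega
  have hall : ∀ i ∈ Finset.range a, lam.rowLen i + mu.rowLen (a - 1 - i) = b := by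
    intro i hi
    by_contra hne
    have hlt : b < lam.rowLen i + mu.rowLen (a - 1 - i) :=
      lt_of_le_of_ne (hge i hi) (Ne.symm hne)
    have hstrict := Finset.sum_lt_sum hge ⟨i, hi, hlt⟩
    rw [hsum, Finset.sum_const, Finset.card_range, smul_eq_mul] at hstrict
    omega
  refine ⟨?_, hlam0, hmu0⟩
  intro i h1 h2
  have h := hall (i - 1) (Finset.mem_range.mpr (by omega))
  have e1 : a - 1 - (i - 1) = a - i := by omega
  rwa [e1] at h

end PartII

/-- **Lemma (rectangles and Littlewood-Richardson coefficients).** Fix `a, b ∈ ℕ` and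
partitions `λ, μ`.
(i) If `c^ν_{λμ} ≠ 0` for some `ν ⊇ (b^a)`, then `λ_i + μ_{a+1-i} ≥ b` for `1 ≤ i ≤ a`
and, equivalently, `λ^t_j + μ^t_{b+1-j} ≥ a` for `1 ≤ j ≤ b`.
(ii) If `|λ| + |μ| = ab`, then `c^{(b^a)}_{λμ} = 1` when `λ` and `μ` are `a × b`-dual,
and `c^{(b^a)}_{λμ} = 0` otherwise. -/
theorem lr_rectangle (a b : ℕ) (lam mu : YoungDiagram) :
    ((∃ ν : YoungDiagram, rect a b ≤ ν ∧ lrCoeff lam mu ν ≠ 0) →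
      ((∀ i : ℕ, 1 ≤ i → i ≤ a → b ≤ lam.rowLen (i - 1) + mu.rowLen (a - i)) ∧
       (∀ j : ℕ, 1 ≤ j → j ≤ b →
          a ≤ lam.transpose.rowLen (j - 1) + mu.transpose.rowLen (b - j)))) ∧
    (lam.card + mu.card = a * b →
      (IsMutuallyDual a b lam mu → lrCoeff lam mu (rect a b) = 1) ∧
      (¬ IsMutuallyDual a b lam mu → lrCoeff lam mu (rect a b) = 0)) := by
  constructor
  · rintro ⟨ν, hrect, hne⟩
    obtain ⟨T, hT⟩ := Set.nonempty_of_ncard_ne_zero hne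
    exact ⟨fun i h1 h2 => part_i_row hT hrect h1 h2,
      fun j h1 h2 => part_i_col hT hrect h1 h2⟩
  · intro hcard
    constructor
    · intro hd
      have hset : {T : ℕ × ℕ → ℕ | IsLRFilling lam mu (rect a b) T} = {T0 a b lam} :=
        Set.eq_singleton_iff_unique_mem.mpr
          ⟨T0_filling hd, fun T hT => filling_eq_T0 hd hT⟩
      rw [lrCoeff, hset, Set.ncard_singleton]
    · intro hnd
      by_contra h
      obtain ⟨T, hT⟩ := Set.nonempty_of_ncard_ne_zero h
      exact hnd (dual_of_filling hcard hT)


end LRPaper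
end
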